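/- Let B and B' be two sets of bases of generalized discrete bi-polymatroids in Z_{≥0}^{m_1+...+m_n} (i.e., both satisfy the generalized bi-exchange property and all elements of B have equal modulus, likewise for B'). Then the Minkowski sum B + B' = {a + a' : a ∈ B, a' ∈ B'} also satisfies the generalized bi-exchange property: for all c, d ∈ B + B' and each coordinate (i,j) with c_{ij} > d_{ij}, there exists l with c_{il} < d_{il} such that c − e_{ij} + e_{il} ∈ B + B'. -/
import Mathlib


open Finset

/-- Index set: pairs (i,j) with 1 ≤ i ≤ n, 1 ≤ j ≤ m i. -/
abbrev Idx (n : ℕ) (m : Fin n → ℕ) := (i : Fin n) × Fin (m i)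

/-- The vector a − e_{ij} + e_{il}. -/
def exchStep {n : ℕ} {m : Fin n → ℕ} (a : Idx n m → ℕ) (i : Fin n) (j l : Fin (m i)) :
    Idx n m → ℕ :=
  fun p => if p = ⟨i, j⟩ then a p - 1 else if p = ⟨i, l⟩ then a p + 1 else a p

/-- The generalized bi-exchange property. -/
def BiExchange {n : ℕ} {m : Fin n → ℕ} (B : Set (Idx n m → ℕ)) : Prop :=
  ∀ a ∈ B, ∀ b ∈ B, ∀ (i : Fin n) (j : Fin (m i)),
    b ⟨i, j⟩ < a ⟨i, j⟩ →
      ∃ l : Fin (m i), a ⟨i, l⟩ < b ⟨i, l⟩ ∧ exchStep a i j l ∈ B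

lemma mk_eq_mk {n : ℕ} {m : Fin n → ℕ} {i : Fin n} {j l : Fin (m i)} :
    (⟨i, j⟩ : Idx n m) = ⟨i, l⟩ ↔ j = l := by simp

lemma mk_ne_mk {n : ℕ} {m : Fin n → ℕ} {i : Fin n} {j l : Fin (m i)} (h : j ≠ l) :
    (⟨i, j⟩ : Idx n m) ≠ ⟨i, l⟩ := fun hh => h (mk_eq_mk.mp hh)

lemma aux {n : ℕ} {m : Fin n → ℕ} {B B' : Set (Idx n m → ℕ)}
    (hex : BiExchange B) (hex' : BiExchange B')
    {b b' c : Idx n m → ℕ} (hb : b ∈ B) (hb' : b' ∈ B')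
    {i : Fin n} {j : Fin (m i)}
    (hcd : b ⟨i, j⟩ + b' ⟨i, j⟩ < c ⟨i, j⟩) :
    ∀ N : ℕ, ∀ u, u ∈ B → ∀ u', u' ∈ B' → ∀ q : Fin (m i),
      (∑ r, ((u r - b r) + (b r - u r) + (u' r - b' r) + (b' r - u' r))) ≤ N →
      (∀ r : Idx n m, u r + u' r + (if r = (⟨i, j⟩ : Idx n m) then 1 else 0)
          = c r + (if r = (⟨i, q⟩ : Idx n m) then 1 else 0)) →
      ∃ l : Fin (m i), c ⟨i, l⟩ < b ⟨i, l⟩ + b' ⟨i, l⟩ ∧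
        ∃ a ∈ B, ∃ a' ∈ B', exchStep c i j l = a + a' := by
  intro N
  induction N using Nat.strong_induction_on with
  | _ N IH =>
    intro u hu u' hu' q hD hinv
    by_cases hdone : c ⟨i, q⟩ < b ⟨i, q⟩ + b' ⟨i, q⟩
    · refine ⟨q, hdone, u, hu, u', hu', ?_⟩
      have hqj : q ≠ j := by rintro rfl; omega
      funext r
      have h1 := hinv r
      simp only [exchStep, Pi.add_apply]
      by_cases h2 : r = (⟨i, j⟩ : Idx n m)
      · subst h2
        have h3 : (⟨i, j⟩ : Idx n m) ≠ ⟨i, q⟩ := mk_ne_mk fun h => hqj h.symm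
        simp only [if_pos rfl, if_true, if_neg h3] at h1 ⊢
        omega
      · simp only [if_neg h2] at h1 ⊢
        by_cases h3 : r = (⟨i, q⟩ : Idx n m)
        · subst h3
          simp only [if_pos rfl, if_true] at h1 ⊢
          omega
        · simp only [if_neg h3] at h1 ⊢
          omega
    · have hbig : b ⟨i, q⟩ + b' ⟨i, q⟩ < u ⟨i, q⟩ + u' ⟨i, q⟩ := by
        have h1 := hinv ⟨i, q⟩
        simp only [if_pos rfl, if_true] at h1
        by_cases hqj : (⟨i, q⟩ : Idx n m) = ⟨i, j⟩
        · rw [hqj] at h1 ⊢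
          simp only [if_pos rfl, if_true] at h1
          omega
        · simp only [if_neg hqj] at h1
          omega
      rcases Nat.lt_or_ge (b ⟨i, q⟩) (u ⟨i, q⟩) with hQ | hQ
      · -- exchange in B
        obtain ⟨l, hl, hmem⟩ := hex u hu b hb i q hQ
        have hlq : l ≠ q := by rintro rfl; omega
        set u2 := exchStep u i q l with hu2
        have hu2r : ∀ r : Idx n m, u2 r =
            if r = (⟨i, q⟩ : Idx n m) then u r - 1 else
            if r = (⟨i, l⟩ : Idx n m) then u r + 1 else u r := fun r => rfl
        have hQL : (⟨i, q⟩ : Idx n m) ≠ ⟨i, l⟩ := mk_ne_mk fun h => hlq h.symm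
        have hLQ : (⟨i, l⟩ : Idx n m) ≠ ⟨i, q⟩ := mk_ne_mk hlq
        have hinv2 : ∀ r : Idx n m, u2 r + u' r + (if r = (⟨i, j⟩ : Idx n m) then 1 else 0)
            = c r + (if r = (⟨i, l⟩ : Idx n m) then 1 else 0) := by
          intro r
          have h1 := hinv r
          rw [hu2r r]
          by_cases hq : r = (⟨i, q⟩ : Idx n m)
          · subst hq
            simp only [if_pos rfl, if_true, if_neg hQL] at h1 ⊢
            omega
          · by_cases hlr : r = (⟨i, l⟩ : Idx n m)
            · subst hlr
              simp only [if_pos rfl, if_true, if_neg hLQ] at h1 ⊢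
              omega
            · simp only [if_neg hq, if_neg hlr] at h1 ⊢
              omega
        have hDlt : (∑ r, ((u2 r - b r) + (b r - u2 r) + (u' r - b' r) + (b' r - u' r)))
            < (∑ r, ((u r - b r) + (b r - u r) + (u' r - b' r) + (b' r - u' r))) := by
          apply Finset.sum_lt_sum
          · intro r _
            rw [hu2r r]
            by_cases hq : r = (⟨i, q⟩ : Idx n m)
            · subst hq
              simp only [if_pos rfl, if_true]
              omega
            · by_cases hlr : r = (⟨i, l⟩ : Idx n m)
              · subst hlr
                simp only [if_pos rfl, if_true, if_neg hLQ]
                omega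
              · simp only [if_neg hq, if_neg hlr]
                omega
          · refine ⟨⟨i, q⟩, Finset.mem_univ _, ?_⟩
            rw [hu2r ⟨i, q⟩]
            simp only [if_pos rfl, if_true]
            omega
        exact IH (N - 1) (by omega) u2 hmem u' hu' l (by omega) hinv2
      · -- exchange in B'
        have hQ' : b' ⟨i, q⟩ < u' ⟨i, q⟩ := by omega
        obtain ⟨l, hl, hmem⟩ := hex' u' hu' b' hb' i q hQ'
        have hlq : l ≠ q := by rintro rfl; omega
        set u2 := exchStep u' i q l with hu2
        have hu2r : ∀ r : Idx n m, u2 r =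
            if r = (⟨i, q⟩ : Idx n m) then u' r - 1 else
            if r = (⟨i, l⟩ : Idx n m) then u' r + 1 else u' r := fun r => rfl
        have hQL : (⟨i, q⟩ : Idx n m) ≠ ⟨i, l⟩ := mk_ne_mk fun h => hlq h.symm
        have hLQ : (⟨i, l⟩ : Idx n m) ≠ ⟨i, q⟩ := mk_ne_mk hlq
        have hinv2 : ∀ r : Idx n m, u r + u2 r + (if r = (⟨i, j⟩ : Idx n m) then 1 else 0)
            = c r + (if r = (⟨i, l⟩ : Idx n m) then 1 else 0) := by
          intro r
          have h1 := hinv r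
          rw [hu2r r]
          by_cases hq : r = (⟨i, q⟩ : Idx n m)
          · subst hq
            simp only [if_pos rfl, if_true, if_neg hQL] at h1 ⊢
            omega
          · by_cases hlr : r = (⟨i, l⟩ : Idx n m)
            · subst hlr
              simp only [if_pos rfl, if_true, if_neg hLQ] at h1 ⊢
              omega
            · simp only [if_neg hq, if_neg hlr] at h1 ⊢
              omega
        have hDlt : (∑ r, ((u r - b r) + (b r - u r) + (u2 r - b' r) + (b' r - u2 r)))
            < (∑ r, ((u r - b r) + (b r - u r) + (u' r - b' r) + (b' r - u' r))) := by
          apply Finset.sum_lt_sum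
          · intro r _
            rw [hu2r r]
            by_cases hq : r = (⟨i, q⟩ : Idx n m)
            · subst hq
              simp only [if_pos rfl, if_true]
              omega
            · by_cases hlr : r = (⟨i, l⟩ : Idx n m)
              · subst hlr
                simp only [if_pos rfl, if_true, if_neg hLQ]
                omega
              · simp only [if_neg hq, if_neg hlr]
                omega
          · refine ⟨⟨i, q⟩, Finset.mem_univ _, ?_⟩
            rw [hu2r ⟨i, q⟩]
            simp only [if_pos rfl, if_true]
            omega
        exact IH (N - 1) (by omega) u hu u2 hmem l (by omega) hinv2

/-- the Minkowski sum of two sets of bases of generalized discrete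
bi-polymatroids satisfies the generalized bi-exchange property. -/
theorem stmt3 {n : ℕ} {m : Fin n → ℕ} (B B' : Set (Idx n m → ℕ)) (t t' : ℕ)
    (hmod : ∀ a ∈ B, (∑ p, a p) = t) (hmod' : ∀ a ∈ B', (∑ p, a p) = t')
    (hex : BiExchange B) (hex' : BiExchange B') :
    BiExchange {c : Idx n m → ℕ | ∃ a ∈ B, ∃ a' ∈ B', c = a + a'} := by
  rintro c ⟨a, ha, a', ha', rfl⟩ d ⟨b, hb, b', hb', rfl⟩ i j hlt
  simp only [Pi.add_apply] at hlt
  have hcd : b ⟨i, j⟩ + b' ⟨i, j⟩ < (a + a') ⟨i, j⟩ := by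
    simpa using hlt
  obtain ⟨l, hl, a2, ha2, a2', ha2', heq⟩ :=
    aux hex hex' hb hb' hcd
      (∑ r, ((a r - b r) + (b r - a r) + (a' r - b' r) + (b' r - a' r)))
      a ha a' ha' j le_rfl
      (fun r => by simp [Pi.add_apply])
  exact ⟨l, by simpa using hl, a2, ha2, a2', ha2', heq⟩
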